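/- Let m ≥ 1 and h ≥ 2 be integers, and let A be a finite subset of an additive abelian group G with |A| = m such that the h-fold sumset hA satisfies |hA| = C(m+h−1, h). Then the (h−1)-fold sumset satisfies |(h−1)A| = C(m+h−2, h−1). -/
import Mathlib


open Finset Pointwise

/-- The `h`-fold sumset `hA`: the set of all sums of `h` elements of `A`
(repetitions allowed). -/
def foldSumset {G : Type*} [AddCommMonoid G] [DecidableEq G] : ℕ → Finset G → Finset G
  | 0, _ => {0}
  | n + 1, A => A + foldSumset n A

/-- The restricted `h`-fold sumset `h^∧A`: the set of all sums of `h` pairwise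
distinct elements of `A`, i.e. sums `∑ x ∈ S, x` over `S ⊆ A` with `|S| = h`. -/
def restrictedSumset {G : Type*} [AddCommMonoid G] [DecidableEq G] (h : ℕ) (A : Finset G) :
    Finset G :=
  (A.powersetCard h).image fun S => S.sum id

/-- The restricted `[0,h]`-fold sumset `[0,h]^∧A = ⋃_{s=0}^{h} s^∧A`. -/
def restrictedIntervalSumset {G : Type*} [AddCommMonoid G] [DecidableEq G] (h : ℕ)
    (A : Finset G) : Finset G :=
  (Finset.range (h + 1)).biUnion fun s => restrictedSumset s A

lemma sym_card_eq {G : Type*} [DecidableEq G] (A : Finset G) (k : ℕ) :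
    (A.sym k).card = (A.card + k - 1).choose k := by
  have himg : A.sym k =
      (Finset.univ : Finset (Sym ↥A k)).image fun t => t.map Subtype.val := by
    ext s
    simp only [Finset.mem_image, Finset.mem_univ, true_and, Finset.mem_sym_iff]
    constructor
    · intro hs
      refine ⟨s.attach.map fun x => ⟨x.1, hs x.1 x.2⟩, ?_⟩
      rw [Sym.map_map]
      exact s.attach_map_coe
    · rintro ⟨t, rfl⟩ a ha
      obtain ⟨x, -, rfl⟩ := Sym.mem_map.1 ha
      exact x.2
  rw [himg, Finset.card_image_of_injective _ (Sym.map_injective Subtype.val_injective _),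
    Finset.card_univ, Sym.card_sym_eq_choose, Fintype.card_coe]

lemma foldSumset_eq_image {G : Type*} [AddCommMonoid G] [DecidableEq G] (k : ℕ) (A : Finset G) :
    foldSumset k A = (A.sym k).image fun s : Sym G k => (s : Multiset G).sum := by
  induction k with
  | zero => simp [foldSumset, Finset.sym_zero]; rfl
  | succ n ih =>
    ext x
    simp only [foldSumset, Finset.mem_add, ih, Finset.mem_image, Finset.mem_sym_iff]
    constructor
    · rintro ⟨a, ha, y, ⟨s, hs, rfl⟩, rfl⟩
      exact ⟨a ::ₛ s, fun b hb => by
        rcases Sym.mem_cons.1 hb with rfl | hb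
        · exact ha
        · exact hs b hb, by simp [Sym.coe_cons]⟩
    · rintro ⟨s, hs, rfl⟩
      obtain ⟨a, t, rfl⟩ := s.exists_eq_cons_of_succ
      exact ⟨a, hs a (Sym.mem_cons_self a t), t.val.sum,
        ⟨t, fun b hb => hs b (Sym.mem_cons.2 (Or.inr hb)), rfl⟩, by simp [Sym.coe_cons]⟩

theorem fold_sumset_pred_card {G : Type*} [AddCommGroup G] [DecidableEq G]
    (m h : ℕ) (hm : 1 ≤ m) (hh : 2 ≤ h) (A : Finset G) (hA : A.card = m)
    (hmax : (foldSumset h A).card = Nat.choose (m + h - 1) h) :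
    (foldSumset (h - 1) A).card = Nat.choose (m + h - 2) (h - 1) := by
  obtain ⟨n, rfl⟩ : ∃ n, h = n + 1 := ⟨h - 1, by omega⟩
  simp only [Nat.add_sub_cancel]
  have hgoal : m + (n + 1) - 2 = m + n - 1 := by omega
  rw [hgoal]
  obtain ⟨a, ha⟩ : A.Nonempty := Finset.card_pos.1 (by omega)
  -- injectivity on sym (n+1)
  have hinj : Set.InjOn (fun s : Sym G (n + 1) => (s : Multiset G).sum) (A.sym (n + 1)) := by
    apply Finset.injOn_of_card_image_eq
    rw [← foldSumset_eq_image, hmax, sym_card_eq, hA]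
  have hinj' : Set.InjOn (fun s : Sym G n => (s : Multiset G).sum) (A.sym n) := by
    intro s hs t ht hst
    have hmem : ∀ u : Sym G n, u ∈ A.sym n → a ::ₛ u ∈ A.sym (n + 1) := by
      intro u hu
      rw [Finset.mem_sym_iff] at hu ⊢
      intro b hb
      rcases Sym.mem_cons.1 hb with rfl | hb
      · exact ha
      · exact hu b hb
    have := hinj (hmem s hs) (hmem t ht) (by simp only [Sym.coe_cons, Multiset.sum_cons]; exact congrArg (a + ·) hst)
    exact (Sym.cons_inj_right a s t).1 this
  rw [foldSumset_eq_image, Finset.card_image_of_injOn hinj', sym_card_eq, hA]
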